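/- arXiv:2408.00750 — 2 statements merged into one kernel-verified Lean document; each statement's English description precedes it below -/
import Mathlib

section
/- Let R ∈ (ℤ/p^αℤ)[z] be a nonzero polynomial with (R mod p) = c·z^{e₀}·G where c ∈ 𝔽_p^×, e₀ ≥ 1, and G ∈ 𝔽_p[z] is not divisible by z. Define λ₀(S) = Λ₀(S · R^{p^α − p^{α−1}}), where Λ₀ is the Cartier operator picking coefficients at exponents divisible by p. If S is a Laurent polynomial over ℤ/p^αℤ with min-degree ≥ 1 − p^{α−1} and degree ≤ p^{α−1}·deg(R mod p), then λ₀ⁿ(S) is a polynomial for all n ≥ 1, and λ₀ⁿ(S) is divisible by z^{p^{α−1}·e₀} for all n ≥ ⌊log_p e₀⌋ + α. -/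
open Finsupp in
/-- The Cartier operator `Λ_r` on Laurent polynomials: the coefficient of `xⁿ` in
`cartier p r S` is the coefficient of `x^(p*n + r)` in `S`. -/
noncomputable def cartier {A : Type*} [CommRing A] (p : ℕ) [NeZero p] (r : ℤ)
    (S : LaurentPolynomial A) : LaurentPolynomial A :=
  AddMonoidAlgebra.ofCoeff <| Finsupp.comapDomain (fun n : ℤ => (p : ℤ) * n + r) S.coeff
    (Set.injOn_of_injective (fun a b h => by
      have hp : (p : ℤ) ≠ 0 := by exact_mod_cast (NeZero.ne p)
      have := mul_left_cancel₀ hp (by linarith [h] : (p : ℤ) * a = p * b)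
      exact this))

open Polynomial LaurentPolynomial in
lemma lmul_coeff_zero {A : Type*} [CommRing A] (f g : LaurentPolynomial A) (j : ℤ)
    (h : ∀ x y : ℤ, x + y = j → f.coeff x = 0 ∨ g.coeff y = 0) : (f * g).coeff j = 0 := by
  classical
  rw [AddMonoidAlgebra.coeff_mul, Finsupp.sum]
  refine Finset.sum_eq_zero fun x hx => ?_
  rw [Finsupp.sum]
  refine Finset.sum_eq_zero fun y hy => ?_
  split_ifs with hxy
  · rcases h x y hxy with h0 | h0 <;> simp [h0]
  · rfl

lemma ltoLaurent_coeff_ne {A : Type*} [CommRing A] (f : Polynomial A) (j : ℤ)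
    (h : (Polynomial.toLaurent f).coeff j ≠ 0) : ∃ i : ℕ, (i : ℤ) = j ∧ f.coeff i ≠ 0 := by
  classical
  have hj : j ∈ (Polynomial.toLaurent f).coeff.support := Finsupp.mem_support_iff.2 h
  rw [LaurentPolynomial.support_coeff_toLaurent] at hj
  rcases Finset.mem_map.1 hj with ⟨i, hi, hij⟩
  exact ⟨i, hij, Polynomial.mem_support_iff.1 hi⟩

lemma lcartier_apply {A : Type*} [CommRing A] (p : ℕ) [NeZero p] (T : LaurentPolynomial A)
    (j : ℤ) : (cartier p 0 T).coeff j = T.coeff ((p : ℤ) * j + 0) := rfl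

/-- Let `R ∈ (ℤ/p^αℤ)[z]` be nonzero with `R mod p = c·z^{e₀}·G`, `c ≠ 0`, `e₀ ≥ 1`,
`z ∤ G`.  Let `λ₀(S) = Λ₀(S · R^{p^α - p^{α-1}})`.  If `S` is a Laurent polynomial
with min-degree `≥ 1 - p^{α-1}` and degree `≤ p^{α-1}·deg(R mod p)`, then `λ₀ⁿ(S)` is
a polynomial for all `n ≥ 1`, and `λ₀ⁿ(S)` is divisible by `z^{p^{α-1}·e₀}` for all
`n ≥ ⌊log_p e₀⌋ + α`. -/
theorem stmt_15 (p : ℕ) [Fact p.Prime] [NeZero p] (α : ℕ) (hα : 1 ≤ α)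
    (R : Polynomial (ZMod (p ^ α))) (hR : R ≠ 0)
    (c : ZMod p) (hc : c ≠ 0) (e₀ : ℕ) (he₀ : 1 ≤ e₀)
    (G : Polynomial (ZMod p)) (hG : G.coeff 0 ≠ 0)
    (hfact : R.map (ZMod.castHom (dvd_pow_self p (by omega)) (ZMod p)) =
      Polynomial.C c * Polynomial.X ^ e₀ * G)
    (lam : LaurentPolynomial (ZMod (p ^ α)) → LaurentPolynomial (ZMod (p ^ α)))
    (hlam : ∀ S, lam S = cartier p 0 (S * Polynomial.toLaurent R ^ (p ^ α - p ^ (α - 1))))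
    (S : LaurentPolynomial (ZMod (p ^ α)))
    (hSmin : ∀ n : ℤ, n < 1 - (p : ℤ) ^ (α - 1) → S.coeff n = 0)
    (hSdeg : ∀ n : ℤ,
      ((p : ℤ) ^ (α - 1)) *
        (R.map (ZMod.castHom (dvd_pow_self p (by omega)) (ZMod p))).natDegree < n →
      S.coeff n = 0) :
    (∀ n : ℕ, 1 ≤ n → ∀ j : ℤ, j < 0 → (lam^[n] S).coeff j = 0) ∧
    (∀ n : ℕ, Nat.log p e₀ + α ≤ n → ∀ j : ℤ, j < (p : ℤ) ^ (α - 1) * e₀ →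
      (lam^[n] S).coeff j = 0) := by
  classical
  have hp2 : 2 ≤ p := (Fact.out : p.Prime).two_le
  set φ : ZMod (p ^ α) →+* ZMod p :=
    ZMod.castHom (dvd_pow_self p (show α ≠ 0 by omega)) (ZMod p) with hφdef
  have hfact' : R.map φ = Polynomial.C c * Polynomial.X ^ e₀ * G := hfact
  set P₀ : Polynomial (ZMod p) := Polynomial.C c * Polynomial.X ^ e₀ * G with hP₀
  set m : ℕ := p ^ (α - 1) with hm
  set N : ℕ := p ^ α - p ^ (α - 1) with hNdef
  set D : ℕ := P₀.natDegree with hD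
  have hm1 : 1 ≤ m := Nat.one_le_pow _ _ (by omega)
  have hpow : p ^ α = p * m := by
    rw [hm]
    conv_lhs => rw [show α = (α - 1) + 1 by omega]
    rw [pow_succ']
  have hNm : N + m = p * m := by
    have hmle : m ≤ p ^ α := by
      rw [hpow]; exact Nat.le_mul_of_pos_left m (by omega)
    rw [hNdef, ← hm, ← hpow]
    omega
  -- the lift of P₀
  set Rt : Polynomial (ZMod (p ^ α)) :=
    ⟨AddMonoidAlgebra.ofCoeff (Finsupp.mapRange (fun x : ZMod p => ((x.val : ℕ) : ZMod (p ^ α))) (by simp)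
      P₀.toFinsupp.coeff)⟩ with hRt
  have hRtcoeff : ∀ i : ℕ, Rt.coeff i = (((P₀.coeff i).val : ℕ) : ZMod (p ^ α)) := by
    intro i
    rw [hRt, Polynomial.coeff_ofFinsupp, AddMonoidAlgebra.coeff_ofCoeff, Finsupp.mapRange_apply]
    rfl
  have hmφ : ∀ x : ZMod p, φ ((x.val : ℕ) : ZMod (p ^ α)) = x := by
    intro x
    rw [map_natCast]
    exact ZMod.natCast_rightInverse x
  have hmapRt : Rt.map φ = P₀ := by
    ext i
    rw [Polynomial.coeff_map, hRtcoeff]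
    exact hmφ _
  have hker : ∀ x : ZMod (p ^ α), φ x = 0 → (p : ZMod (p ^ α)) ∣ x := by
    intro x hx
    have h1 : ((x.val : ℕ) : ZMod p) = 0 := by
      rw [ZMod.natCast_val]
      rw [hφdef, ZMod.castHom_apply] at hx
      exact hx
    obtain ⟨k, hk⟩ := (ZMod.natCast_eq_zero_iff x.val p).1 h1
    refine ⟨(k : ZMod (p ^ α)), ?_⟩
    have h2 : ((x.val : ℕ) : ZMod (p ^ α)) = x := ZMod.natCast_rightInverse x
    rw [← h2, hk]
    push_cast
    ring
  have hdvdRRt : Polynomial.C (p : ZMod (p ^ α)) ∣ R - Rt := by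
    rw [Polynomial.C_dvd_iff_dvd_coeff]
    intro i
    apply hker
    have h0 : (R - Rt).map φ = 0 := by
      rw [Polynomial.map_sub, hfact', hmapRt, hP₀, sub_self]
    have h1 := congrArg (fun q => Polynomial.coeff q i) h0
    simpa [Polynomial.coeff_map] using h1
  -- lifting the exponent
  have hpowEq : R ^ N = Rt ^ N := by
    have h1 : (p : Polynomial (ZMod (p ^ α))) ∣ R ^ (p - 1) - Rt ^ (p - 1) := by
      rw [← Polynomial.C_eq_natCast]
      exact dvd_trans hdvdRRt (sub_dvd_pow_sub_pow R Rt (p - 1))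
    have h2 := dvd_sub_pow_of_dvd_sub h1 (α - 1)
    have h3 : (p : Polynomial (ZMod (p ^ α))) ^ (α - 1 + 1) = 0 := by
      rw [show α - 1 + 1 = α by omega, ← Nat.cast_pow, ← Polynomial.C_eq_natCast,
        ZMod.natCast_self, Polynomial.C_0]
    rw [h3, zero_dvd_iff, sub_eq_zero] at h2
    have hNN : N = (p - 1) * p ^ (α - 1) := by
      rw [hNdef, ← hm, Nat.sub_mul, one_mul, ← hpow, hm]
    calc R ^ N = (R ^ (p - 1)) ^ (p ^ (α - 1)) := by rw [← pow_mul, ← hNN]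
      _ = (Rt ^ (p - 1)) ^ (p ^ (α - 1)) := h2
      _ = Rt ^ N := by rw [← pow_mul, ← hNN]
  set Q : Polynomial (ZMod (p ^ α)) := Rt ^ N with hQ
  set lo : ℕ := e₀ * N with hlo
  set hiN : ℕ := N * D with hhiN
  have hQlow : ∀ d : ℕ, d < lo → Q.coeff d = 0 := by
    have h1 : (Polynomial.X : Polynomial (ZMod (p ^ α))) ^ e₀ ∣ Rt := by
      rw [Polynomial.X_pow_dvd_iff]
      intro d hd
      rw [hRtcoeff]
      have h2 : (Polynomial.X : Polynomial (ZMod p)) ^ e₀ ∣ P₀ :=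
        ⟨Polynomial.C c * G, by rw [hP₀]; ring⟩
      have h3 : P₀.coeff d = 0 := Polynomial.X_pow_dvd_iff.1 h2 d hd
      simp [h3]
    have h4 : (Polynomial.X : Polynomial (ZMod (p ^ α))) ^ lo ∣ Q := by
      rw [hQ, hlo, pow_mul]
      exact pow_dvd_pow_of_dvd h1 N
    exact Polynomial.X_pow_dvd_iff.1 h4
  have hdegRt : Rt.natDegree ≤ D := by
    rw [Polynomial.natDegree_le_iff_coeff_eq_zero]
    intro M hM
    rw [hRtcoeff]
    have h3 : P₀.coeff M = 0 := Polynomial.coeff_eq_zero_of_natDegree_lt hM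
    simp [h3]
  have hQhigh : ∀ d : ℕ, hiN < d → Q.coeff d = 0 := by
    intro d hd
    apply Polynomial.coeff_eq_zero_of_natDegree_lt
    calc Q.natDegree ≤ N * Rt.natDegree := Polynomial.natDegree_pow_le
      _ ≤ N * D := Nat.mul_le_mul_left _ hdegRt
      _ < d := hd
  have hQL0 : ∀ y : ℤ, (y < (lo : ℤ) ∨ (hiN : ℤ) < y) →
      (Polynomial.toLaurent R ^ N).coeff y = 0 := by
    intro y hy
    by_contra hne
    have hQLQ : Polynomial.toLaurent R ^ N = Polynomial.toLaurent Q := by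
      rw [← map_pow, hpowEq, hQ]
    rw [hQLQ] at hne
    obtain ⟨i, hij, hi⟩ := ltoLaurent_coeff_ne Q y hne
    rcases hy with hy | hy
    · exact hi (hQlow i (by omega))
    · exact hi (hQhigh i (by omega))
  -- product facts
  have hPE : p * (e₀ * m) = lo + e₀ * m := by
    rw [hlo, ← Nat.mul_add, hNm]; ring
  have hPD : p * (m * D) = hiN + m * D := by
    rw [hhiN, ← Nat.add_mul, hNm, Nat.mul_assoc]
  set em : ℕ := e₀ * m with hem
  set mD : ℕ := m * D with hmD
  set g₀ : ℕ := em + m - 1 with hg₀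
  have hemz : 1 ≤ em := by
    rw [hem]
    calc 1 = 1 * 1 := by ring
      _ ≤ e₀ * m := Nat.mul_le_mul he₀ hm1
  have hmem : m ≤ em := by
    rw [hem]
    exact Nat.le_mul_of_pos_left m (by omega)
  -- make everything opaque
  clear hQlow hQhigh hdegRt hmapRt hRtcoeff hdvdRRt hpowEq hQ hRt
  clear Q Rt
  clear_value m N D lo hiN em mD g₀
  have hPEZ : (p : ℤ) * (em : ℤ) = (lo : ℤ) + (em : ℤ) := by exact_mod_cast hPE
  have hPDZ : (p : ℤ) * (mD : ℤ) = (hiN : ℤ) + (mD : ℤ) := by exact_mod_cast hPD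
  have hg₀Z : (g₀ : ℤ) = (em : ℤ) + (m : ℤ) - 1 := by
    rw [hg₀]
    have : 1 ≤ em + m := by omega
    push_cast [Nat.cast_sub this]
    ring
  have hmz : ((p : ℤ)) ^ (α - 1) = (m : ℤ) := by rw [hm]; push_cast; ring
  -- the key support estimate
  have key : ∀ n : ℕ, ∀ j : ℤ,
      (j < (em : ℤ) - (g₀ / p ^ n : ℕ) ∨ (mD : ℤ) < j) → (lam^[n] S).coeff j = 0 := by
    intro n
    induction n with
    | zero =>
      intro j hj
      simp only [Function.iterate_zero, id]
      rcases hj with hj | hj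
      · apply hSmin
        rw [hmz]
        simp only [pow_zero, Nat.div_one] at hj
        linarith
      · apply hSdeg
        rw [hmz]
        have h3 : (R.map φ).natDegree = D := by rw [hfact']; exact hD.symm
        rw [h3]
        have h4 : (mD : ℤ) = (m : ℤ) * D := by rw [hmD]; push_cast; ring
        linarith
    | succ n ih =>
      intro j hj
      rw [Function.iterate_succ_apply', hlam, lcartier_apply]
      apply lmul_coeff_zero
      intro x y hxy
      rw [add_zero] at hxy
      by_cases hylo : y < (lo : ℤ)
      · exact Or.inr (hQL0 y (Or.inl hylo))
      by_cases hyhi : (hiN : ℤ) < y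
      · exact Or.inr (hQL0 y (Or.inr hyhi))
      push_neg at hylo hyhi
      left
      apply ih
      have hgdiv : ((g₀ / p ^ n : ℕ) : ℤ) < (p : ℤ) * ((g₀ / p ^ (n + 1) : ℕ) : ℤ) + p := by
        have h1 : g₀ / p ^ (n + 1) = g₀ / p ^ n / p := by
          rw [Nat.div_div_eq_div_mul, ← pow_succ]
        have h2 : g₀ / p ^ n < p * (g₀ / p ^ n / p) + p := by
          rw [Nat.mul_comm]
          exact Nat.lt_div_mul_add (by omega)
        rw [h1]
        exact_mod_cast h2
      rcases hj with hj | hj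
      · left
        have hj' : j + 1 ≤ (em : ℤ) - ((g₀ / p ^ (n + 1) : ℕ) : ℤ) :=
          Int.lt_iff_add_one_le.mp hj
        have hpj : (p : ℤ) * (j + 1) ≤
            (p : ℤ) * ((em : ℤ) - ((g₀ / p ^ (n + 1) : ℕ) : ℤ)) :=
          mul_le_mul_of_nonneg_left hj' (by positivity)
        have hexp : (p : ℤ) * ((em : ℤ) - ((g₀ / p ^ (n + 1) : ℕ) : ℤ)) =
            (p : ℤ) * (em : ℤ) - (p : ℤ) * ((g₀ / p ^ (n + 1) : ℕ) : ℤ) := by ring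
        rw [hexp] at hpj
        have hexp2 : (p : ℤ) * (j + 1) = (p : ℤ) * j + p := by ring
        rw [hexp2] at hpj
        linarith [hpj, hgdiv, hPEZ, hylo, hxy]
      · right
        have hj' : (mD : ℤ) + 1 ≤ j := Int.lt_iff_add_one_le.mp hj
        have hpj : (p : ℤ) * ((mD : ℤ) + 1) ≤ (p : ℤ) * j :=
          mul_le_mul_of_nonneg_left hj' (by positivity)
        have hexp : (p : ℤ) * ((mD : ℤ) + 1) = (p : ℤ) * (mD : ℤ) + p := by ring
        rw [hexp] at hpj
        linarith [hpj, hPDZ, hyhi, hxy]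
  constructor
  · intro n hn j hj
    apply key n
    left
    have h1 : g₀ / p ^ n ≤ g₀ / p := Nat.div_le_div_left (Nat.le_self_pow (by omega) p) (by omega)
    have h2 : g₀ / p ≤ g₀ / 2 := Nat.div_le_div_left hp2 (by norm_num)
    have h3 : g₀ ≤ 2 * em := by omega
    have h4 : g₀ / 2 ≤ em := by omega
    have h5 : g₀ / p ^ n ≤ em := le_trans h1 (le_trans h2 h4)
    have h6 : ((g₀ / p ^ n : ℕ) : ℤ) ≤ (em : ℤ) := by exact_mod_cast h5
    linarith
  · intro n hn j hj
    apply key n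
    left
    have hlog : e₀ < p ^ (Nat.log p e₀ + 1) := Nat.lt_pow_succ_log_self (by omega) e₀
    have hle : g₀ < p ^ n := by
      calc g₀ < (e₀ + 1) * m := by
            have hrw : (e₀ + 1) * m = em + m := by rw [hem]; ring
            omega
        _ ≤ p ^ (Nat.log p e₀ + 1) * p ^ (α - 1) := by
            rw [hm]; exact Nat.mul_le_mul (by omega) le_rfl
        _ = p ^ (Nat.log p e₀ + 1 + (α - 1)) := (pow_add p _ _).symm
        _ ≤ p ^ n := Nat.pow_le_pow_right (by omega) (by omega)
    have h0 : g₀ / p ^ n = 0 := Nat.div_eq_of_lt hle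
    rw [h0]
    rw [hmz] at hj
    have hemZ : (em : ℤ) = (e₀ : ℤ) * m := by rw [hem]; push_cast; ring
    push_cast
    linarith
end

section
/- Let R = c ∈ (ℤ/p^αℤ)^× be such that R mod p is a nonzero constant, and define λ₀(S) = Λ₀(S · R^{p^α − p^{α−1}}) on Laurent polynomials over ℤ/p^αℤ. Then λ₀ⁿ(S) = Λ₀ⁿ(S), and for any Laurent polynomial S with min-degree ≥ 1 − p^{α−1} and degree ≤ 0, λ₀ⁿ(S) equals the constant term of S for all n ≥ α − 1. -/
lemma cartier_apply {A : Type*} [CommRing A] (p : ℕ) [NeZero p]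
    (S : LaurentPolynomial A) (m : ℤ) : (cartier p 0 S).coeff m = S.coeff ((p : ℤ) * m) := by
  show S.coeff ((p : ℤ) * m + 0) = S.coeff ((p : ℤ) * m)
  rw [add_zero]

lemma cartier_iterate_apply {A : Type*} [CommRing A] (p : ℕ) [NeZero p]
    (S : LaurentPolynomial A) (n : ℕ) (m : ℤ) :
    ((cartier p 0)^[n] S).coeff m = S.coeff ((p : ℤ) ^ n * m) := by
  induction n generalizing m with
  | zero => simp
  | succ n ih =>
    rw [Function.iterate_succ_apply', cartier_apply, ih]
    ring_nf

/-- Let `R = c` be a unit constant in `ℤ/p^αℤ` and `λ₀(S) = Λ₀(S · c^{p^α - p^{α-1}})`.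
Then `λ₀ⁿ = Λ₀ⁿ`, and for any Laurent polynomial `S` with min-degree `≥ 1 - p^{α-1}`
and degree `≤ 0`, `λ₀ⁿ(S)` equals the constant term of `S` for all `n ≥ α - 1`. -/
theorem stmt_16 (p : ℕ) [Fact p.Prime] [NeZero p] (α : ℕ) (hα : 1 ≤ α)
    (c : ZMod (p ^ α)) (hc : IsUnit c)
    (lam : LaurentPolynomial (ZMod (p ^ α)) → LaurentPolynomial (ZMod (p ^ α)))
    (hlam : ∀ S, lam S =
      cartier p 0 (S * LaurentPolynomial.C c ^ (p ^ α - p ^ (α - 1)))) :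
    (∀ (S : LaurentPolynomial (ZMod (p ^ α))) (n : ℕ),
      lam^[n] S = (cartier p 0)^[n] S) ∧
    (∀ S : LaurentPolynomial (ZMod (p ^ α)),
      (∀ n : ℤ, n < 1 - (p : ℤ) ^ (α - 1) → S.coeff n = 0) →
      (∀ n : ℤ, 0 < n → S.coeff n = 0) →
      ∀ n : ℕ, α - 1 ≤ n → lam^[n] S = LaurentPolynomial.C (S.coeff 0)) := by
  have hp : p.Prime := Fact.out
  have htot : Nat.totient (p ^ α) = p ^ α - p ^ (α - 1) := by
    rw [Nat.totient_prime_pow hp hα]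
    have h1 : p ^ α = p ^ (α - 1) * p := by
      rw [← pow_succ]; congr 1; omega
    rw [h1]
    rcases Nat.exists_eq_add_of_le hp.one_lt.le with ⟨k, hk⟩
    subst hk
    simp [Nat.mul_add, Nat.mul_sub, Nat.add_sub_cancel_left, Nat.mul_one]
  have hc1 : c ^ (p ^ α - p ^ (α - 1)) = 1 := by
    obtain ⟨u, rfl⟩ := hc
    rw [← htot]
    rw [← Units.val_pow_eq_pow_val, ZMod.pow_totient, Units.val_one]
  have hlam' : lam = cartier p 0 := by
    funext S
    rw [hlam, ← map_pow, hc1, map_one, mul_one]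
  subst hlam'
  refine ⟨fun S n => rfl, fun S hlo hhi n hn => ?_⟩
  have hpow : (p : ℤ) ^ (α - 1) ≤ (p : ℤ) ^ n := by
    apply pow_le_pow_right₀ _ hn
    exact_mod_cast hp.one_lt.le
  have hp0 : (0 : ℤ) < (p : ℤ) := by exact_mod_cast hp.pos
  have hpos : (0 : ℤ) < (p : ℤ) ^ n := pow_pos hp0 n
  ext m
  rw [cartier_iterate_apply]
  rcases eq_or_ne m 0 with rfl | hm
  · simp
  · rw [LaurentPolynomial.C_apply, if_neg hm]
    rcases lt_or_gt_of_ne hm with hneg | hposm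
    · apply hlo
      have : m ≤ -1 := by omega
      nlinarith
    · apply hhi
      exact mul_pos hpos hposm
end
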